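/- Let d ≥ 4 be even. There is a constant C₀ > 0 independent of q such that for every power q of an odd prime and every subset F ⊂ C, ‖F ∗ M̂‖_{L^∞(F_q^d, dx)} ≤ C₀ |F| / q^d, i.e., max_{x∈F_q^d} |F ∗ M̂(x)| ≤ C₀ |F| q^{−d}. -/

import Mathlib

open Finset MeasureTheory
open scoped ENNReal

namespace ConeFF

variable (F : Type) [Field F] [Fintype F] [DecidableEq F]

/-- The cone `C = {x ∈ F^d : x₁² + ⋯ + x_{d-2}² = x_{d-1} x_d}` (0-indexed). -/
def cone (d : ℕ) (hd : 3 ≤ d) : Finset (Fin d → F) :=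
  Finset.univ.filter fun x =>
    (∑ i ∈ Finset.univ.filter (fun i : Fin d => (i : ℕ) < d - 2), x i ^ 2) =
      x ⟨d - 2, by omega⟩ * x ⟨d - 1, by omega⟩

/-- The quadratic form `Γ(ξ) = ξ₁² + ⋯ + ξ_{d-2}² − 4 ξ_{d-1} ξ_d`. -/
def gammaForm (d : ℕ) (hd : 3 ≤ d) (ξ : Fin d → F) : F :=
  (∑ i ∈ Finset.univ.filter (fun i : Fin d => (i : ℕ) < d - 2), ξ i ^ 2) -
    4 * ξ ⟨d - 2, by omega⟩ * ξ ⟨d - 1, by omega⟩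

/-- Indicator function of a finite set, with values in `ℂ`. -/
def ind {V : Type} [DecidableEq V] (E : Finset V) : V → ℂ :=
  fun x => if x ∈ E then 1 else 0

/-- Convolution with respect to the normalized counting measure `dx`. -/
noncomputable def conv (d : ℕ) (f g : (Fin d → F) → ℂ) : (Fin d → F) → ℂ :=
  fun y => ((Fintype.card F : ℂ) ^ d)⁻¹ * ∑ x, f (y - x) * g x

/-- The averaging operator `f ∗ σ` over the cone. -/
noncomputable def avg (d : ℕ) (hd : 3 ≤ d) (f : (Fin d → F) → ℂ) : (Fin d → F) → ℂ :=
  fun y => ((cone F d hd).card : ℂ)⁻¹ * ∑ x ∈ cone F d hd, f (y - x)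

/-- Inverse Fourier transform `f^∨(m) = q^{-d} ∑_x χ(m·x) f(x)`. -/
noncomputable def invFT (d : ℕ) (χ : AddChar F ℂ) (f : (Fin d → F) → ℂ)
    (m : Fin d → F) : ℂ :=
  ((Fintype.card F : ℂ) ^ d)⁻¹ * ∑ x, χ (dotProduct m x) * f x

/-- Fourier transform `ĝ(x) = ∑_m χ(−m·x) g(m)` on the dual space. -/
noncomputable def ft (d : ℕ) (χ : AddChar F ℂ) (g : (Fin d → F) → ℂ)
    (x : Fin d → F) : ℂ :=
  ∑ m, χ (-(dotProduct m x)) * g m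

/-- `σ^∨(m) = |C|⁻¹ ∑_{x∈C} χ(m·x)`. -/
noncomputable def sigmaInv (d : ℕ) (hd : 3 ≤ d) (χ : AddChar F ℂ) (m : Fin d → F) : ℂ :=
  ((cone F d hd).card : ℂ)⁻¹ * ∑ x ∈ cone F d hd, χ (dotProduct m x)

/-- `K(m) = σ^∨(m) − δ₀(m)`. -/
noncomputable def Kfun (d : ℕ) (hd : 3 ≤ d) (χ : AddChar F ℂ) (m : Fin d → F) : ℂ :=
  sigmaInv F d hd χ m - if m = 0 then 1 else 0

/-- `M(m) = C^∨(m) − (|C|/q^d) δ₀(m)`. -/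
noncomputable def Mfun (d : ℕ) (hd : 3 ≤ d) (χ : AddChar F ℂ) (m : Fin d → F) : ℂ :=
  invFT F d χ (ind (cone F d hd)) m -
    if m = 0 then ((cone F d hd).card : ℂ) / (Fintype.card F : ℂ) ^ d else 0

/-- `L^p(C,σ)` norm (for finite `p`), with `σ` the normalized surface measure. -/
noncomputable def coneLpNorm (d : ℕ) (hd : 3 ≤ d) (p : ℝ) (h : (Fin d → F) → ℂ) : ℝ :=
  (((cone F d hd).card : ℝ)⁻¹ * ∑ x ∈ cone F d hd, ‖h x‖ ^ p) ^ (1 / p)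

/-- `L^p(F_q^d, dx)` norm (for finite `p`), with `dx` the normalized counting measure. -/
noncomputable def spaceLpNorm (d : ℕ) (p : ℝ) (f : (Fin d → F) → ℂ) : ℝ :=
  (((Fintype.card F : ℝ) ^ d)⁻¹ * ∑ x, ‖f x‖ ^ p) ^ (1 / p)



set_option linter.unusedSectionVars false in
lemma char_map_sum {ι : Type} (χ : AddChar F ℂ) (s : Finset ι) (f : ι → F) :
    χ (∑ i ∈ s, f i) = ∏ i ∈ s, χ (f i) := by
  classical
  induction s using Finset.cons_induction with
  | empty => simp
  | cons a s ha ih => rw [Finset.sum_cons, AddChar.map_add_eq_mul, ih, Finset.prod_cons]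

lemma sum_char_dot {d : ℕ} (χ : AddChar F ℂ) (hχ : ∃ a, χ a ≠ 1) (v : Fin d → F) :
    ∑ m : Fin d → F, χ (dotProduct m v) =
      if v = 0 then ((Fintype.card F : ℂ)) ^ d else 0 := by
  have hprim : χ.IsPrimitive := by
    refine AddChar.IsPrimitive.of_ne_one (AddChar.ne_one_iff.mpr ?_)
    obtain ⟨a, ha⟩ := hχ
    exact ⟨a, ha⟩
  have key : ∀ b : F, ∑ t : F, χ (t * b) = if b = 0 then (Fintype.card F : ℂ) else 0 := by
    intro b
    simpa using AddChar.sum_mulShift b hprim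
  calc ∑ m : Fin d → F, χ (dotProduct m v)
      = ∑ m : Fin d → F, ∏ i, χ (m i * v i) := by
        simp only [dotProduct, char_map_sum]
    _ = ∏ i : Fin d, ∑ t : F, χ (t * v i) := by
        rw [← Fintype.piFinset_univ]
        exact Finset.sum_prod_piFinset Finset.univ fun i t => χ (t * v i)
    _ = if v = 0 then ((Fintype.card F : ℂ)) ^ d else 0 := by
        simp only [key]
        by_cases hv : v = 0
        · simp [hv]
        · obtain ⟨i, hi⟩ : ∃ i, v i ≠ 0 := by
            by_contra h
            push_neg at h
            exact hv (funext h)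
          rw [if_neg hv]
          exact Finset.prod_eq_zero (Finset.mem_univ i) (by simp [hi])


lemma ft_Mfun (d : ℕ) (hd : 3 ≤ d) (χ : AddChar F ℂ) (hχ : ∃ a, χ a ≠ 1) (x : Fin d → F) :
    ft F d χ (Mfun F d hd χ) x =
      ind (cone F d hd) x - ((cone F d hd).card : ℂ) / (Fintype.card F : ℂ) ^ d := by
  have hq : ((Fintype.card F : ℂ)) ^ d ≠ 0 :=
    pow_ne_zero _ (Nat.cast_ne_zero.mpr Fintype.card_ne_zero)
  unfold ft Mfun
  rw [show (∑ m : Fin d → F, χ (-(dotProduct m x)) *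
      (invFT F d χ (ind (cone F d hd)) m -
        if m = 0 then ((cone F d hd).card : ℂ) / (Fintype.card F : ℂ) ^ d else 0)) =
      (∑ m : Fin d → F, χ (-(dotProduct m x)) * invFT F d χ (ind (cone F d hd)) m) -
      (∑ m : Fin d → F, χ (-(dotProduct m x)) *
        if m = 0 then ((cone F d hd).card : ℂ) / (Fintype.card F : ℂ) ^ d else 0) by
    rw [← Finset.sum_sub_distrib]; congr 1; ext m; ring]
  congr 1
  · -- first sum equals ind (cone) x
    unfold invFT
    have h1 : ∀ (m y : Fin d → F), χ (dotProduct m (y - x)) =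
        χ (-(dotProduct m x)) * χ (dotProduct m y) := by
      intro m y
      rw [show dotProduct m (y - x) = -(dotProduct m x) + dotProduct m y by
        rw [dotProduct_sub]; ring, AddChar.map_add_eq_mul]
    calc ∑ m : Fin d → F, χ (-(dotProduct m x)) *
          (((Fintype.card F : ℂ) ^ d)⁻¹ * ∑ y, χ (dotProduct m y) * ind (cone F d hd) y)
        = ∑ y, ((Fintype.card F : ℂ) ^ d)⁻¹ *
            (ind (cone F d hd) y * ∑ m : Fin d → F, χ (dotProduct m (y - x))) := by
          simp only [Finset.mul_sum]
          rw [Finset.sum_comm]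
          refine Finset.sum_congr rfl fun y _ => Finset.sum_congr rfl fun m _ => ?_
          rw [h1 m y]; ring
      _ = ind (cone F d hd) x := by
          simp only [sum_char_dot F χ hχ, sub_eq_zero]
          rw [Finset.sum_eq_single x]
          · rw [if_pos rfl]
            field_simp
          · intro y _ hy
            simp [hy]
          · intro h; exact absurd (Finset.mem_univ x) h
  · rw [Finset.sum_eq_single 0]
    · simp
    · intro m _ hm; rw [if_neg hm, mul_zero]
    · intro h; exact absurd (Finset.mem_univ 0) h


/-- `‖F ∗ M̂‖_{L^∞(F_q^d,dx)} ≲ |F| q^{-d}` for `F ⊆ C` and even `d ≥ 4`. -/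
theorem statement13 (d : ℕ) (hd : 4 ≤ d) (hde : Even d) :
    ∃ C₀ : ℝ, 0 < C₀ ∧
      ∀ (F : Type) [Field F] [Fintype F] [DecidableEq F], ringChar F ≠ 2 →
        ∀ χ : AddChar F ℂ, (∃ a, χ a ≠ 1) →
          ∀ S : Finset (Fin d → F), S ⊆ cone F d (by omega) →
            ∀ x : Fin d → F,
              ‖conv F d (ind S) (ft F d χ (Mfun F d (by omega) χ)) x‖ ≤
                C₀ * (S.card : ℝ) / (Fintype.card F : ℝ) ^ d := by
  refine ⟨2, by norm_num, ?_⟩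
  intro F _ _ _ _ χ hχ S hS x
  have h3 : (3 : ℕ) ≤ d := by omega
  set q : ℝ := (Fintype.card F : ℝ) with hqdef
  have hq0 : (0:ℝ) < q := by
    simpa [hqdef] using (Nat.cast_pos (α := ℝ)).mpr Fintype.card_pos
  have hqd : (0:ℝ) < q ^ d := pow_pos hq0 d
  have hcone_le : ((cone F d h3).card : ℝ) ≤ q ^ d := by
    have h := Finset.card_le_univ (cone F d h3)
    have : ((cone F d h3).card : ℝ) ≤ (Fintype.card (Fin d → F) : ℝ) := by
      exact_mod_cast le_trans h (le_of_eq (Finset.card_univ))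
    simpa [Fintype.card_fun, hqdef] using this
  -- pointwise bound on the kernel
  have hker : ∀ y : Fin d → F, ‖ft F d χ (Mfun F d h3 χ) y‖ ≤ 2 := by
    intro y
    rw [ft_Mfun F d h3 χ hχ y]
    refine le_trans (norm_sub_le _ _) ?_
    have h1 : ‖ind (cone F d h3) y‖ ≤ 1 := by
      unfold ind; split <;> simp
    have h2 : ‖((cone F d h3).card : ℂ) / (Fintype.card F : ℂ) ^ d‖ ≤ 1 := by
      rw [norm_div, norm_pow, Complex.norm_natCast, Complex.norm_natCast]
      rw [div_le_one hqd]
      exact hcone_le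
    linarith
  have hindS : ∀ z : Fin d → F, ‖ind S z‖ ≤ if z ∈ S then 1 else 0 := by
    intro z; unfold ind; split <;> simp
  unfold conv
  rw [norm_mul]
  have hnorm1 : ‖((Fintype.card F : ℂ) ^ d)⁻¹‖ = (q ^ d)⁻¹ := by
    rw [norm_inv, norm_pow, Complex.norm_natCast]
  rw [hnorm1]
  have hsum : ‖∑ y : Fin d → F, ind S (x - y) * ft F d χ (Mfun F d h3 χ) y‖ ≤
      2 * (S.card : ℝ) := by
    refine le_trans (norm_sum_le _ _) ?_
    have hstep : ∀ y : Fin d → F, ‖ind S (x - y) * ft F d χ (Mfun F d h3 χ) y‖ ≤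
        (if x - y ∈ S then (1:ℝ) else 0) * 2 := by
      intro y
      rw [norm_mul]
      exact mul_le_mul (hindS (x - y)) (hker y) (norm_nonneg _)
        (by split <;> norm_num)
    refine le_trans (Finset.sum_le_sum fun y _ => hstep y) ?_
    rw [← Finset.sum_mul]
    have : (∑ y : Fin d → F, if x - y ∈ S then (1:ℝ) else 0) = (S.card : ℝ) := by
      rw [show (∑ y : Fin d → F, if x - y ∈ S then (1:ℝ) else 0) =
          ∑ z : Fin d → F, if z ∈ S then (1:ℝ) else 0 from
        Fintype.sum_equiv (Equiv.subLeft x) _ _ fun y => rfl]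
      simp [Finset.sum_ite_mem]
    rw [this]; linarith
  calc (q ^ d)⁻¹ * ‖∑ y : Fin d → F, ind S (x - y) * ft F d χ (Mfun F d h3 χ) y‖
      ≤ (q ^ d)⁻¹ * (2 * (S.card : ℝ)) := by
        exact mul_le_mul_of_nonneg_left hsum (inv_nonneg.mpr hqd.le)
    _ = 2 * (S.card : ℝ) / q ^ d := by field_simp

end ConeFF
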